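/- Let Sym(m,ℂ) = {V ∈ M_m(ℂ) : Vᵀ = V} and let h : Sym(m,ℂ) × Sym(m,ℂ) → ℂ be sesquilinear (complex linear in the first variable, conjugate linear in the second) and Hermitian, and suppose h(AVAᵀ, AWAᵀ) = h(V,W) for all V, W ∈ Sym(m,ℂ) and all A ∈ U(m). Then there exists a real constant c such that h(V,W) = c · tr(V W*) for all V, W ∈ Sym(m,ℂ). -/

import Mathlib

open Matrix

namespace TypeIIAux

variable {m : ℕ}





/-- symmetric basis matrices -/
def B (i j : Fin m) : Matrix (Fin m) (Fin m) ℂ :=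
  Matrix.single i j 1 + Matrix.single j i 1

lemma stdBasis_transpose (i j : Fin m) :
    (Matrix.single i j (1:ℂ))ᵀ = Matrix.single j i 1 := by
  ext a b
  simp [Matrix.single, Matrix.transpose_apply, and_comm]

lemma B_symm (i j : Fin m) : B j i = B i j := add_comm _ _

lemma B_transpose (i j : Fin m) : (B i j)ᵀ = B i j := by
  rw [B, transpose_add, stdBasis_transpose, stdBasis_transpose, add_comm]

lemma stdBasis_conjTranspose (i j : Fin m) :
    (Matrix.single i j (1:ℂ))ᴴ = Matrix.single j i 1 := by
  ext a b
  simp [Matrix.single, Matrix.conjTranspose_apply, and_comm, apply_ite (starRingEnd ℂ)]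

lemma B_conjTranspose (i j : Fin m) : (B i j)ᴴ = B i j := by
  rw [B, conjTranspose_add, stdBasis_conjTranspose, stdBasis_conjTranspose, add_comm]

lemma B_apply (i j a b : Fin m) :
    B i j a b = (if i = a ∧ j = b then (1:ℂ) else 0) + (if j = a ∧ i = b then 1 else 0) := by
  simp [B, Matrix.single]

/-- decomposition of a symmetric matrix -/
lemma decomp (V : Matrix (Fin m) (Fin m) ℂ) (hV : Vᵀ = V) :
    V = ∑ p : Fin m × Fin m, (V p.1 p.2 / 2) • B p.1 p.2 := by
  ext a b
  rw [Matrix.sum_apply]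
  have hba : V b a = V a b := by conv_rhs => rw [← hV, Matrix.transpose_apply]
  simp only [Matrix.smul_apply, B_apply, smul_eq_mul, mul_add, Finset.sum_add_distrib]
  rw [Fintype.sum_prod_type, Fintype.sum_prod_type]
  simp [ite_and, mul_ite, Finset.sum_ite_eq', hba]
  try ring




lemma trace_EE (i j k l : Fin m) :
    (Matrix.single i j (1:ℂ) * Matrix.single k l 1).trace
      = if j = k ∧ i = l then 1 else 0 := by
  by_cases hjk : j = k
  · subst hjk
    rw [Matrix.single_mul_single_same]
    by_cases hil : i = l
    · subst hil; simp [Matrix.trace_single_eq_same]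
    · rw [Matrix.trace_single_eq_of_ne _ _ _ (fun hh => hil hh)]
      simp [hil]
  · rw [Matrix.single_mul_single_of_ne (i := i) (j := j) (c := (1:ℂ)) (h := hjk) (d := 1)]
    simp [hjk]

lemma trace_BB (i j k l : Fin m) :
    (B i j * (B k l)ᴴ).trace
      = (if i = k ∧ j = l then 2 else 0) + (if i = l ∧ j = k then (2:ℂ) else 0) := by
  have hconj : (B k l)ᴴ = B k l := by
    have : (Matrix.single k l (1:ℂ))ᴴ = Matrix.single l k 1 := by
      ext a b
      simp [Matrix.single, Matrix.conjTranspose_apply, and_comm, apply_ite (starRingEnd ℂ)]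
    have h2 : (Matrix.single l k (1:ℂ))ᴴ = Matrix.single k l 1 := by
      ext a b
      simp [Matrix.single, Matrix.conjTranspose_apply, and_comm, apply_ite (starRingEnd ℂ)]
    rw [B, conjTranspose_add, this, h2, add_comm]
  rw [hconj]
  simp only [B, add_mul, mul_add, trace_add, trace_EE]
  by_cases h1 : i = k <;> by_cases h2 : j = l <;> by_cases h3 : i = l <;> by_cases h4 : j = k <;>
    by_cases h5 : k = l <;>
    simp [h1, h2, h3, h4, h5, eq_comm] <;> ring





lemma diag_conj (d : Fin m → ℂ) (i j : Fin m) :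
    diagonal d * B i j * (diagonal d)ᵀ = (d i * d j) • B i j := by
  rw [diagonal_transpose]
  ext a b
  rw [Matrix.smul_apply, Matrix.mul_diagonal, Matrix.diagonal_mul, smul_eq_mul, B_apply]
  by_cases h1 : i = a ∧ j = b
  · obtain ⟨rfl, rfl⟩ := h1; by_cases h2 : j = i ∧ i = j
    · obtain ⟨rfl, -⟩ := h2; ring
    · simp [h2]; try ring
  · by_cases h2 : j = a ∧ i = b
    · obtain ⟨rfl, rfl⟩ := h2; simp [h1]; try ring
    · simp [h1, h2]

lemma diag_unitary (d : Fin m → ℂ) (hd : ∀ p, starRingEnd ℂ (d p) * d p = 1) :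
    diagonal d ∈ Matrix.unitaryGroup (Fin m) ℂ := by
  rw [Matrix.mem_unitaryGroup_iff']
  have : star (diagonal d) = diagonal (star d) := by
    rw [Matrix.star_eq_conjTranspose, Matrix.diagonal_conjTranspose]
  rw [this, diagonal_mul_diagonal]
  ext p q
  rcases eq_or_ne p q with rfl | hpq
  · simp only [Matrix.diagonal_apply_eq, Matrix.one_apply_eq, ← starRingEnd_apply]
    exact hd p
  · rw [Matrix.diagonal_apply_ne _ hpq, Matrix.one_apply_ne hpq]

lemma exists_p (i j k l : Fin m) (h1 : ¬(k = i ∧ l = j)) (h2 : ¬(k = j ∧ l = i)) :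
    ∃ p : Fin m, ((if i = p then 1 else 0) + (if j = p then 1 else 0) : ℕ)
      ≠ (if k = p then 1 else 0) + (if l = p then 1 else 0) := by
  by_contra hc
  push_neg at hc
  have Hi := hc i
  have Hj := hc j
  by_cases hji : j = i
  · subst hji
    simp only [if_pos rfl] at Hi
    by_cases hk : k = j <;> by_cases hl : l = j <;> simp [hk, hl] at Hi
    exact h1 ⟨hk, hl⟩
  · simp only [if_pos rfl, if_neg hji, if_neg (fun hh : i = j => hji hh.symm)] at Hi Hj
    have Hi' : (k = i ∧ ¬ l = i) ∨ (¬ k = i ∧ l = i) := by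
      by_cases hk : k = i <;> by_cases hl : l = i <;> simp [hk, hl] at Hi <;> tauto
    have Hj' : (k = j ∧ ¬ l = j) ∨ (¬ k = j ∧ l = j) := by
      by_cases hk : k = j <;> by_cases hl : l = j <;> simp [hk, hl] at Hj <;> tauto
    rcases Hi' with ⟨hki, hli⟩ | ⟨hki, hli⟩ <;> rcases Hj' with ⟨hkj, hlj⟩ | ⟨hkj, hlj⟩
    · exact hji (hkj.symm.trans hki)
    · exact h1 ⟨hki, hlj⟩
    · exact h2 ⟨hkj, hli⟩
    · exact hji (hlj.symm.trans hli)

lemma mult_le (i j p : Fin m) : ((if i = p then 1 else 0) + (if j = p then 1 else 0) : ℕ) ≤ 2 := by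
  split_ifs <;> omega

lemma d_pow (i j p : Fin m) :
    (if i = p then Complex.I else 1) * (if j = p then Complex.I else 1)
      = Complex.I ^ ((if i = p then 1 else 0) + (if j = p then 1 else 0) : ℕ) := by
  by_cases hi : i = p <;> by_cases hj : j = p <;> simp [hi, hj, pow_succ]

lemma Ipow_ne (a b : ℕ) (ha : a ≤ 2) (hb : b ≤ 2) (hab : a ≠ b) :
    Complex.I ^ a * (starRingEnd ℂ) (Complex.I ^ b) ≠ 1 := by
  interval_cases a <;> interval_cases b <;>
    simp_all [pow_succ, Complex.ext_iff] <;> norm_num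




noncomputable def sq2 : ℂ := ((Real.sqrt 2)⁻¹ : ℝ)

lemma sq2_mul : sq2 * sq2 = 1/2 := by
  rw [sq2, ← Complex.ofReal_mul, ← mul_inv, Real.mul_self_sqrt (by norm_num)]
  norm_num

lemma sq2_conj : (starRingEnd ℂ) sq2 = sq2 := Complex.conj_ofReal _

/-- the rotation in the `i,j` plane by 45 degrees -/
noncomputable def R (i j : Fin m) : Matrix (Fin m) (Fin m) ℂ :=
  of fun a b =>
    if b = i then (if a = i then sq2 else if a = j then -sq2 else 0)
    else if b = j then (if a = i then sq2 else if a = j then sq2 else 0)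
    else if a = b then 1 else 0

lemma R_apply_i {i j : Fin m} (hij : i ≠ j) (a : Fin m) :
    R i j a i = if a = i then sq2 else if a = j then -sq2 else 0 := by
  simp [R]

lemma R_apply_j {i j : Fin m} (hij : i ≠ j) (a : Fin m) :
    R i j a j = if a = i then sq2 else if a = j then sq2 else 0 := by
  simp [R, if_neg (Ne.symm hij)]

lemma R_apply_other {i j : Fin m} (a c : Fin m) (hci : c ≠ i) (hcj : c ≠ j) :
    R i j a c = if a = c then 1 else 0 := by
  simp [R, if_neg hci, if_neg hcj]

lemma R_real {i j : Fin m} (a b : Fin m) : (starRingEnd ℂ) (R i j a b) = R i j a b := by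
  simp only [R, of_apply]
  split_ifs <;> simp [sq2_conj]

lemma sum_two {i j : Fin m} (hij : i ≠ j) (f : Fin m → ℂ)
    (hf : ∀ c, c ≠ i → c ≠ j → f c = 0) : ∑ c, f c = f i + f j :=
  Finset.sum_eq_add i j hij (fun c _ hc => hf c hc.1 hc.2)
    (fun hx => absurd (Finset.mem_univ _) hx) (fun hx => absurd (Finset.mem_univ _) hx)

lemma R_unitary {i j : Fin m} (hij : i ≠ j) : R i j ∈ Matrix.unitaryGroup (Fin m) ℂ := by
  rw [Matrix.mem_unitaryGroup_iff]
  ext a b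
  rw [Matrix.mul_apply]
  have hst : ∀ c, star (R i j) c b = R i j b c := by
    intro c
    rw [Matrix.star_apply, ← starRingEnd_apply, R_real]
  simp only [hst]
  by_cases hai : a = i <;> by_cases haj : a = j
  · exact absurd (hai.symm.trans haj) hij
  · -- a = i
    rw [sum_two hij _ (fun c hci hcj => by
      rw [R_apply_other a c hci hcj, if_neg (fun hh : a = c => hci (hh.symm.trans hai)), zero_mul])]
    rw [R_apply_i hij a, R_apply_i hij b, R_apply_j hij a, R_apply_j hij b]
    by_cases hbi : b = i <;> by_cases hbj : b = j <;>
      first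
        | exact absurd (hbi.symm.trans hbj) hij
        | (simp [Matrix.one_apply, hai, haj, hbi, hbj, hij, Ne.symm hij]
           try simp [Ne.symm hbi, Ne.symm hbj]
           try first | linear_combination 2 * sq2_mul | linear_combination)
  · -- a = j
    rw [sum_two hij _ (fun c hci hcj => by
      rw [R_apply_other a c hci hcj, if_neg (fun hh : a = c => hcj (hh.symm.trans haj)), zero_mul])]
    rw [R_apply_i hij a, R_apply_i hij b, R_apply_j hij a, R_apply_j hij b]
    by_cases hbi : b = i <;> by_cases hbj : b = j <;>
      first
        | exact absurd (hbi.symm.trans hbj) hij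
        | (simp [Matrix.one_apply, hai, haj, hbi, hbj, hij, Ne.symm hij]
           try simp [Ne.symm hbi, Ne.symm hbj]
           try first | linear_combination 2 * sq2_mul | linear_combination)
  · -- a ∉ {i, j}
    rw [Finset.sum_eq_single a (fun c _ hca => by
        by_cases hci : c = i
        · rw [hci, R_apply_i hij a, R_apply_i hij b]
          simp [hai, haj]
        · by_cases hcj : c = j
          · rw [hcj, R_apply_j hij a, R_apply_j hij b]
            simp [hai, haj]
          · rw [R_apply_other a c hci hcj, if_neg (fun hh : a = c => hca hh.symm), zero_mul])
      (fun hx => absurd (Finset.mem_univ _) hx)]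
    rw [R_apply_other a a hai haj, R_apply_other b a hai haj]
    simp [Matrix.one_apply, eq_comm]



lemma conj_entry (A : Matrix (Fin m) (Fin m) ℂ) (p q a b : Fin m) :
    (A * Matrix.single p q (1:ℂ) * Aᵀ) a b = A a p * A b q := by
  rw [Matrix.mul_apply]
  have : ∀ y, (A * Matrix.single p q (1:ℂ)) a y * Aᵀ y b
      = if q = y then A a p * A b y else 0 := by
    intro y
    rw [Matrix.mul_apply]
    by_cases hqy : q = y
    · subst hqy
      rw [if_pos rfl]
      rw [Finset.sum_eq_single p (fun c _ hcp => by
          have hpc : ¬ p = c := fun hh => hcp hh.symm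
          simp [Matrix.single, hpc])
        (fun hx => absurd (Finset.mem_univ _) hx)]
      simp [Matrix.single, Matrix.transpose_apply, mul_comm]
    · rw [if_neg hqy]
      rw [Finset.sum_eq_zero (fun c _ => by simp [Matrix.single, hqy]), zero_mul]
  simp only [this]
  rw [Finset.sum_ite_eq Finset.univ q (fun y => A a p * A b y)]
  simp

lemma conjB_entry (A : Matrix (Fin m) (Fin m) ℂ) (p q a b : Fin m) :
    (A * B p q * Aᵀ) a b = A a p * A b q + A a q * A b p := by
  rw [B, Matrix.mul_add, Matrix.add_mul, Matrix.add_apply, conj_entry, conj_entry]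

lemma R_conj_Bii {i j : Fin m} (hij : i ≠ j) :
    R i j * B i i * (R i j)ᵀ
      = (1/2 : ℂ) • B i i + (1/2 : ℂ) • B j j + (-1 : ℂ) • B i j := by
  ext a b
  rw [conjB_entry, R_apply_i hij a, R_apply_i hij b]
  simp only [Matrix.add_apply, Matrix.smul_apply, B, Matrix.single,
    Matrix.add_apply, Matrix.of_apply, smul_eq_mul]
  by_cases hai : a = i <;> by_cases haj : a = j <;>
    by_cases hbi : b = i <;> by_cases hbj : b = j <;>
    first
      | exact absurd (hai.symm.trans haj) hij
      | exact absurd (hbi.symm.trans hbj) hij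
      | (simp [hai, haj, hbi, hbj, hij, Ne.symm hij]
         try simp [Ne.symm hbi]
         try simp [Ne.symm hbj]
         try simp [Ne.symm hai]
         try simp [Ne.symm haj]
         try first | linear_combination 2 * sq2_mul | linear_combination (-2 : ℂ) * sq2_mul | linear_combination)

lemma R_conj_Bjj {i j : Fin m} (hij : i ≠ j) :
    R i j * B j j * (R i j)ᵀ
      = (1/2 : ℂ) • B i i + (1/2 : ℂ) • B j j + (1 : ℂ) • B i j := by
  ext a b
  rw [conjB_entry, R_apply_j hij a, R_apply_j hij b]
  simp only [Matrix.add_apply, Matrix.smul_apply, B, Matrix.single,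
    Matrix.add_apply, Matrix.of_apply, smul_eq_mul]
  by_cases hai : a = i <;> by_cases haj : a = j <;>
    by_cases hbi : b = i <;> by_cases hbj : b = j <;>
    first
      | exact absurd (hai.symm.trans haj) hij
      | exact absurd (hbi.symm.trans hbj) hij
      | (simp [hai, haj, hbi, hbj, hij, Ne.symm hij]
         try simp [Ne.symm hbi]
         try simp [Ne.symm hbj]
         try simp [Ne.symm hai]
         try simp [Ne.symm haj]
         try first | linear_combination 2 * sq2_mul | linear_combination (-2 : ℂ) * sq2_mul | linear_combination)



lemma tbilin (ι κ : Type) (s : Finset ι) (t : Finset κ) (aa : ι → ℂ) (bb : κ → ℂ)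
    (P : ι → Matrix (Fin m) (Fin m) ℂ) (Q : κ → Matrix (Fin m) (Fin m) ℂ) :
    ((∑ i ∈ s, aa i • P i) * (∑ j ∈ t, bb j • Q j)ᴴ).trace
      = ∑ i ∈ s, ∑ j ∈ t, aa i * (starRingEnd ℂ (bb j) * (P i * (Q j)ᴴ).trace) := by
  rw [Matrix.conjTranspose_sum, Matrix.sum_mul, Matrix.trace_sum]
  refine Finset.sum_congr rfl fun i _ => ?_
  rw [Matrix.mul_sum, Matrix.trace_sum]
  refine Finset.sum_congr rfl fun j _ => ?_
  rw [Matrix.conjTranspose_smul, Matrix.smul_mul, Matrix.mul_smul, Matrix.trace_smul,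
    Matrix.trace_smul]
  simp only [smul_eq_mul, starRingEnd_apply]
  try ring


end TypeIIAux
/-- every `U(m)`-invariant (under `V ↦ A V Aᵀ`) Hermitian sesquilinear form on
the symmetric complex matrices is a real constant multiple of `(V,W) ↦ tr(V W*)`. -/
theorem invariant_hermitian_form_typeII (m : ℕ)
    (h : Matrix (Fin m) (Fin m) ℂ → Matrix (Fin m) (Fin m) ℂ → ℂ)
    (hadd₁ : ∀ V V' W : Matrix (Fin m) (Fin m) ℂ, Vᵀ = V → V'ᵀ = V' → Wᵀ = W →
      h (V + V') W = h V W + h V' W)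
    (hsmul₁ : ∀ (a : ℂ) (V W : Matrix (Fin m) (Fin m) ℂ), Vᵀ = V → Wᵀ = W →
      h (a • V) W = a * h V W)
    (hadd₂ : ∀ V W W' : Matrix (Fin m) (Fin m) ℂ, Vᵀ = V → Wᵀ = W → W'ᵀ = W' →
      h V (W + W') = h V W + h V W')
    (hsmul₂ : ∀ (a : ℂ) (V W : Matrix (Fin m) (Fin m) ℂ), Vᵀ = V → Wᵀ = W →
      h V (a • W) = starRingEnd ℂ a * h V W)
    (hherm : ∀ V W : Matrix (Fin m) (Fin m) ℂ, Vᵀ = V → Wᵀ = W →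
      h W V = starRingEnd ℂ (h V W))
    (hinv : ∀ V W : Matrix (Fin m) (Fin m) ℂ, Vᵀ = V → Wᵀ = W →
      ∀ A ∈ Matrix.unitaryGroup (Fin m) ℂ, h (A * V * Aᵀ) (A * W * Aᵀ) = h V W) :
    ∃ c : ℝ, ∀ V W : Matrix (Fin m) (Fin m) ℂ, Vᵀ = V → Wᵀ = W →
      h V W = (c : ℂ) * (V * Wᴴ).trace := by
  classical
  open TypeIIAux in
  -- trivial case `m = 0`
  rcases Nat.eq_zero_or_pos m with hm | hm
  · subst hm
    refine ⟨0, fun V W hV hW => ?_⟩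
    have hV0 : V = 0 := by ext a b; exact a.elim0
    have hW0 : W = 0 := by ext a b; exact a.elim0
    have h00 := hsmul₁ 0 0 0 Matrix.transpose_zero Matrix.transpose_zero
    simp only [zero_smul, zero_mul] at h00
    rw [hV0, hW0, h00]
    simp
  -- main case
  set i0 : Fin m := ⟨0, hm⟩ with hi0
  have hBt : ∀ i j : Fin m, (B i j)ᵀ = B i j := fun i j => B_transpose i j
  have h0 : ∀ W : Matrix (Fin m) (Fin m) ℂ, Wᵀ = W → h 0 W = 0 := by
    intro W hW
    have := hsmul₁ 0 0 W Matrix.transpose_zero hW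
    simpa using this
  have hsum₁ : ∀ (ι : Type) (s : Finset ι) (f : ι → Matrix (Fin m) (Fin m) ℂ),
      (∀ i, (f i)ᵀ = f i) → ∀ W, Wᵀ = W →
      h (∑ i ∈ s, f i) W = ∑ i ∈ s, h (f i) W := by
    intro ι s f hf W hW
    induction s using Finset.induction_on with
    | empty => simpa using h0 W hW
    | @insert x s' hx ih =>
      have hs : (∑ i ∈ s', f i)ᵀ = ∑ i ∈ s', f i := by
        rw [Matrix.transpose_sum]; exact Finset.sum_congr rfl fun i _ => hf i
      rw [Finset.sum_insert hx, hadd₁ _ _ _ (hf _) hs hW, ih, Finset.sum_insert hx]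
  have h0' : ∀ V : Matrix (Fin m) (Fin m) ℂ, Vᵀ = V → h V 0 = 0 := by
    intro V hV
    have := hsmul₂ 0 V 0 hV Matrix.transpose_zero
    simpa using this
  have hsum₂ : ∀ (κ : Type) (t : Finset κ) (g : κ → Matrix (Fin m) (Fin m) ℂ),
      (∀ j, (g j)ᵀ = g j) → ∀ V, Vᵀ = V →
      h V (∑ j ∈ t, g j) = ∑ j ∈ t, h V (g j) := by
    intro κ t g hg V hV
    induction t using Finset.induction_on with
    | empty => simpa using h0' V hV
    | @insert x t' hx ih =>
      have hs : (∑ j ∈ t', g j)ᵀ = ∑ j ∈ t', g j := by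
        rw [Matrix.transpose_sum]; exact Finset.sum_congr rfl fun j _ => hg j
      rw [Finset.sum_insert hx, hadd₂ _ _ _ hV (hg _) hs, ih, Finset.sum_insert hx]
  have hbilin : ∀ (ι κ : Type) (s : Finset ι) (t : Finset κ) (aa : ι → ℂ) (bb : κ → ℂ)
      (P : ι → Matrix (Fin m) (Fin m) ℂ) (Q : κ → Matrix (Fin m) (Fin m) ℂ),
      (∀ i, (P i)ᵀ = P i) → (∀ j, (Q j)ᵀ = Q j) →
      h (∑ i ∈ s, aa i • P i) (∑ j ∈ t, bb j • Q j)
        = ∑ i ∈ s, ∑ j ∈ t, aa i * (starRingEnd ℂ (bb j) * h (P i) (Q j)) := by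
    intro ι κ s t aa bb P Q hP hQ
    have hPs : ∀ i, (aa i • P i)ᵀ = aa i • P i := fun i => by
      rw [Matrix.transpose_smul, hP]
    have hQs : ∀ j, (bb j • Q j)ᵀ = bb j • Q j := fun j => by
      rw [Matrix.transpose_smul, hQ]
    have hQt : (∑ j ∈ t, bb j • Q j)ᵀ = ∑ j ∈ t, bb j • Q j := by
      rw [Matrix.transpose_sum]; exact Finset.sum_congr rfl fun j _ => hQs j
    rw [hsum₁ ι s _ hPs _ hQt]
    refine Finset.sum_congr rfl fun i _ => ?_
    rw [hsmul₁ _ _ _ (hP i) hQt, hsum₂ κ t _ hQs _ (hP i), Finset.mul_sum]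
    refine Finset.sum_congr rfl fun j _ => ?_
    rw [hsmul₂ _ _ _ (hP i) (hQ j)]
  -- vanishing of off-multiset pairs
  have vanish : ∀ i j k l : Fin m, ¬(k = i ∧ l = j) → ¬(k = j ∧ l = i) →
      h (B i j) (B k l) = 0 := by
    intro i j k l h1 h2
    obtain ⟨p, hp⟩ := exists_p i j k l h1 h2
    set d : Fin m → ℂ := fun q => if q = p then Complex.I else 1 with hd
    have hdu : Matrix.diagonal d ∈ Matrix.unitaryGroup (Fin m) ℂ := by
      refine diag_unitary d fun q => ?_
      by_cases hq : q = p <;> simp [hd, hq, Complex.conj_I, Complex.I_mul_I]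
    have hinv' := hinv (B i j) (B k l) (hBt i j) (hBt k l) (Matrix.diagonal d) hdu
    rw [diag_conj d i j, diag_conj d k l] at hinv'
    have hWs : ((d k * d l) • B k l)ᵀ = (d k * d l) • B k l := by
      rw [Matrix.transpose_smul, hBt]
    rw [hsmul₁ _ _ _ (hBt i j) hWs, hsmul₂ _ _ _ (hBt i j) (hBt k l)] at hinv'
    have e1 : d i * d j
        = Complex.I ^ ((if i = p then 1 else 0) + (if j = p then 1 else 0) : ℕ) := by
      simp only [hd]; exact d_pow i j p
    have e2 : d k * d l
        = Complex.I ^ ((if k = p then 1 else 0) + (if l = p then 1 else 0) : ℕ) := by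
      simp only [hd]; exact d_pow k l p
    rw [e1, e2] at hinv'
    have key := Ipow_ne _ _ (mult_le i j p) (mult_le k l p) hp
    have hzz : (Complex.I ^ ((if i = p then 1 else 0) + (if j = p then 1 else 0) : ℕ)
        * (starRingEnd ℂ) (Complex.I ^ ((if k = p then 1 else 0) + (if l = p then 1 else 0) : ℕ))
        - 1) * h (B i j) (B k l) = 0 := by
      linear_combination hinv'
    rcases mul_eq_zero.mp hzz with hz | hz
    · exact absurd (by linear_combination hz) key
    · exact hz
  -- the rotation relations
  have rot : ∀ i j : Fin m, i ≠ j →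
      h (B i i) (B i i) = h (B j j) (B j j) ∧
      h (B i j) (B i j) = h (B i i) (B i i) / 2 := by
    intro i j hij
    have hPv : ∀ k : Fin 3, ((![B i i, B j j, B i j] : Fin 3 → _) k)ᵀ
        = (![B i i, B j j, B i j] : Fin 3 → _) k := by
      intro k; fin_cases k <;> simp [hBt]
    have e1 := hinv (B i i) (B i i) (hBt i i) (hBt i i) (R i j) (R_unitary hij)
    rw [R_conj_Bii hij] at e1
    have hXc : (1/2 : ℂ) • B i i + (1/2 : ℂ) • B j j + (-1 : ℂ) • B i j
        = ∑ k : Fin 3, (![(1/2 : ℂ), 1/2, -1] : Fin 3 → ℂ) k • (![B i i, B j j, B i j] : Fin 3 → _) k := by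
      simp [Fin.sum_univ_three]
    rw [hXc, hbilin (Fin 3) (Fin 3) Finset.univ Finset.univ _ _ _ _ hPv hPv] at e1
    simp only [Fin.sum_univ_three, Matrix.cons_val_zero, Matrix.cons_val_one,
      Matrix.head_cons, Matrix.cons_val_two, Matrix.tail_cons] at e1
    rw [vanish i i j j (by simp [Ne.symm hij]) (by simp [Ne.symm hij]),
      vanish i i i j (by simp [Ne.symm hij]) (by simp [Ne.symm hij]),
      vanish j j i i (by simp [hij]) (by simp [hij]),
      vanish j j i j (by simp [hij]) (by simp [hij]),
      vanish i j i i (by simp [hij]) (by simp [hij]),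
      vanish i j j j (by simp [Ne.symm hij]) (by simp [Ne.symm hij])] at e1
    simp only [map_div₀, _root_.map_one, map_ofNat, map_neg, mul_zero, add_zero, zero_add] at e1
    have e2 := hinv (B j j) (B j j) (hBt j j) (hBt j j) (R i j) (R_unitary hij)
    rw [R_conj_Bjj hij] at e2
    have hXc' : (1/2 : ℂ) • B i i + (1/2 : ℂ) • B j j + (1 : ℂ) • B i j
        = ∑ k : Fin 3, (![(1/2 : ℂ), 1/2, 1] : Fin 3 → ℂ) k • (![B i i, B j j, B i j] : Fin 3 → _) k := by
      simp [Fin.sum_univ_three]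
    rw [hXc', hbilin (Fin 3) (Fin 3) Finset.univ Finset.univ _ _ _ _ hPv hPv] at e2
    simp only [Fin.sum_univ_three, Matrix.cons_val_zero, Matrix.cons_val_one,
      Matrix.head_cons, Matrix.cons_val_two, Matrix.tail_cons] at e2
    rw [vanish i i j j (by simp [Ne.symm hij]) (by simp [Ne.symm hij]),
      vanish i i i j (by simp [Ne.symm hij]) (by simp [Ne.symm hij]),
      vanish j j i i (by simp [hij]) (by simp [hij]),
      vanish j j i j (by simp [hij]) (by simp [hij]),
      vanish i j i i (by simp [hij]) (by simp [hij]),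
      vanish i j j j (by simp [Ne.symm hij]) (by simp [Ne.symm hij])] at e2
    simp only [map_div₀, _root_.map_one, map_ofNat, map_neg, mul_zero, add_zero, zero_add] at e2
    constructor
    · linear_combination e2 - e1
    · linear_combination (3/4 : ℂ) * e1 + (1/4 : ℂ) * e2
  have diag_eq : ∀ i : Fin m, h (B i i) (B i i) = h (B i0 i0) (B i0 i0) := by
    intro i
    by_cases hi : i = i0
    · rw [hi]
    · exact (rot i i0 hi).1
  have off_eq : ∀ i j : Fin m, i ≠ j →
      h (B i j) (B i j) = h (B i0 i0) (B i0 i0) / 2 := by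
    intro i j hij
    rw [(rot i j hij).2, diag_eq i]
  -- the constant
  have hκ : (starRingEnd ℂ) (h (B i0 i0) (B i0 i0)) = h (B i0 i0) (B i0 i0) :=
    (hherm (B i0 i0) (B i0 i0) (hBt i0 i0) (hBt i0 i0)).symm
  refine ⟨(h (B i0 i0) (B i0 i0)).re / 4, ?_⟩
  have hcC : (((h (B i0 i0) (B i0 i0)).re / 4 : ℝ) : ℂ) = h (B i0 i0) (B i0 i0) / 4 := by
    rw [Complex.ofReal_div]
    rw [Complex.conj_eq_iff_re.mp hκ]
    norm_num
  intro V W hV hW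
  -- the key identity on basis elements
  have key : ∀ i j k l : Fin m, h (B i j) (B k l)
      = (((h (B i0 i0) (B i0 i0)).re / 4 : ℝ) : ℂ) * (B i j * (B k l)ᴴ).trace := by
    intro i j k l
    rw [trace_BB, hcC]
    by_cases h1 : k = i ∧ l = j
    · rw [h1.1, h1.2]
      by_cases hij : i = j
      · rw [hij, diag_eq j]
        simp
        ring
      · rw [off_eq i j hij]
        simp [hij]
        ring
    · by_cases h2 : k = j ∧ l = i
      · rw [h2.1, h2.2]
        have hij : ¬ i = j := fun hh => h1 ⟨(h2.1.trans hh.symm), (h2.2.trans hh)⟩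
        rw [B_symm i j, off_eq i j hij]
        simp [hij]
        ring
      · have c1 : ¬(i = k ∧ j = l) := fun hc => h1 ⟨hc.1.symm, hc.2.symm⟩
        have c2 : ¬(i = l ∧ j = k) := fun hc => h2 ⟨hc.2.symm, hc.1.symm⟩
        rw [vanish i j k l h1 h2]
        simp [c1, c2]
  -- final computation
  calc h V W
      = ∑ p : Fin m × Fin m, ∑ q : Fin m × Fin m,
          (V p.1 p.2 / 2) * (starRingEnd ℂ (W q.1 q.2 / 2) * h (B p.1 p.2) (B q.1 q.2)) := by
        conv_lhs => rw [decomp V hV, decomp W hW]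
        exact hbilin _ _ _ _ _ _ _ _ (fun p => hBt p.1 p.2) (fun q => hBt q.1 q.2)
    _ = ∑ p : Fin m × Fin m, ∑ q : Fin m × Fin m,
          (V p.1 p.2 / 2) * (starRingEnd ℂ (W q.1 q.2 / 2)
            * ((((h (B i0 i0) (B i0 i0)).re / 4 : ℝ) : ℂ)
                * (B p.1 p.2 * (B q.1 q.2)ᴴ).trace)) := by
        refine Finset.sum_congr rfl fun p _ => Finset.sum_congr rfl fun q _ => ?_
        rw [key p.1 p.2 q.1 q.2]
    _ = (((h (B i0 i0) (B i0 i0)).re / 4 : ℝ) : ℂ)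
          * ∑ p : Fin m × Fin m, ∑ q : Fin m × Fin m,
            (V p.1 p.2 / 2) * (starRingEnd ℂ (W q.1 q.2 / 2)
              * (B p.1 p.2 * (B q.1 q.2)ᴴ).trace) := by
        rw [Finset.mul_sum]
        refine Finset.sum_congr rfl fun p _ => ?_
        rw [Finset.mul_sum]
        refine Finset.sum_congr rfl fun q _ => ?_
        ring
    _ = (((h (B i0 i0) (B i0 i0)).re / 4 : ℝ) : ℂ) * (V * Wᴴ).trace := by
        rw [← tbilin (Fin m × Fin m) (Fin m × Fin m) Finset.univ Finset.univ
          (fun p => V p.1 p.2 / 2) (fun q => W q.1 q.2 / 2)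
          (fun p => B p.1 p.2) (fun q => B q.1 q.2), ← decomp V hV, ← decomp W hW]
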